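/- Let p be a prime and g(x) ∈ 𝔽_p[x] a nonzero polynomial of degree strictly less than p. Then the multiplicity of 1 as a root of g is strictly less than the number of nonzero coefficients of g. -/
import Mathlib

open Polynomial

private lemma rm_one_X {R : Type*} [CommRing R] [Nontrivial R] :
    (Polynomial.X : R[X]).rootMultiplicity 1 = 0 :=
  Polynomial.rootMultiplicity_eq_zero (by simp [Polynomial.IsRoot])

private lemma supp_X_mul {R : Type*} [Semiring R] (q : R[X]) :
    (Polynomial.X * q).support.card = q.support.card := by
  have h : (Polynomial.X * q).support = q.support.image (· + 1) := by
    ext n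
    cases n with
    | zero => simp [Polynomial.coeff_X_mul_zero, Polynomial.mem_support_iff]
    | succ k =>
      simp only [Polynomial.mem_support_iff, Polynomial.coeff_X_mul, Finset.mem_image]
      constructor
      · exact fun h => ⟨k, h, rfl⟩
      · rintro ⟨a, ha, hak⟩
        obtain rfl : a = k := by omega
        exact ha
  rw [h, Finset.card_image_of_injective _ (add_left_injective 1)]

private lemma key (p : ℕ) (hp : p.Prime) :
    ∀ n (g : Polynomial (ZMod p)), g.natDegree + g.rootMultiplicity 1 ≤ n → g ≠ 0 →
      g.natDegree < p → g.rootMultiplicity 1 < g.support.card := by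
  haveI : Fact p.Prime := ⟨hp⟩
  intro n
  induction n with
  | zero =>
    intro g hn hg _
    have h1 : g.rootMultiplicity 1 = 0 := by omega
    have h2 : g.support.Nonempty := Polynomial.support_nonempty.2 hg
    rw [h1]
    exact Finset.card_pos.2 h2
  | succ n ih =>
    intro g hn hg hdeg
    by_cases h0 : g.coeff 0 = 0
    · -- g = X * divX g
      have hgx : g = Polynomial.X * g.divX := by
        conv_lhs => rw [← Polynomial.X_mul_divX_add g]
        simp [h0]
      have hdvx : g.divX ≠ 0 := by
        intro h
        rw [h, mul_zero] at hgx
        exact hg hgx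
      have hd1 : 1 ≤ g.natDegree := by
        by_contra h
        push_neg at h
        interval_cases hh : g.natDegree
        · exact hg (by rw [Polynomial.eq_C_of_natDegree_eq_zero hh, h0, map_zero])
      have hdeg' : g.divX.natDegree = g.natDegree - 1 :=
        Polynomial.natDegree_divX_eq_natDegree_tsub_one
      have hrm : g.rootMultiplicity 1 = g.divX.rootMultiplicity 1 := by
        conv_lhs => rw [hgx]
        rw [Polynomial.rootMultiplicity_mul (by rw [← hgx]; exact hg), rm_one_X, zero_add]
      have := ih g.divX (by omega) hdvx (by omega)
      rw [hrm]
      calc g.divX.rootMultiplicity 1 < g.divX.support.card := this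
        _ = g.support.card := by conv_rhs => rw [hgx, supp_X_mul]
    · by_cases hm : g.rootMultiplicity 1 = 0
      · rw [hm]
        exact Finset.card_pos.2 (Polynomial.support_nonempty.2 hg)
      · set m := g.rootMultiplicity 1 with hmdef
        have hroot : g.IsRoot 1 := by
          by_contra h
          exact hm (Polynomial.rootMultiplicity_eq_zero h)
        have hmle : m ≤ g.natDegree := by
          have hdvd := Polynomial.pow_rootMultiplicity_dvd g 1
          have := Polynomial.natDegree_le_of_dvd hdvd hg
          rwa [Polynomial.natDegree_pow, Polynomial.natDegree_X_sub_C, mul_one] at this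
        have hmp : (m : ZMod p) ≠ 0 := by
          intro h
          rw [ZMod.natCast_eq_zero_iff] at h
          have := Nat.le_of_dvd (by omega) h
          omega
        have hrm' : g.derivative.rootMultiplicity 1 = m - 1 :=
          Polynomial.derivative_rootMultiplicity_of_root_of_mem_nonZeroDivisors hroot
            (mem_nonZeroDivisors_of_ne_zero hmp)
        have hd1 : 1 ≤ g.natDegree := by
          by_contra h
          push_neg at h
          interval_cases hh : g.natDegree
          · have := Polynomial.eq_C_of_natDegree_eq_zero hh
            rw [this] at hroot
            simp only [Polynomial.IsRoot, Polynomial.eval_C] at hroot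
            exact h0 (by rw [this, Polynomial.coeff_C_zero, hroot])
        have hder : g.derivative ≠ 0 := by
          intro h
          have he : g.natDegree - 1 + 1 = g.natDegree := by omega
          have hc := Polynomial.coeff_derivative g (g.natDegree - 1)
          rw [h, Polynomial.coeff_zero] at hc
          have hcast : ((g.natDegree - 1 : ℕ) : ZMod p) + 1
              = ((g.natDegree - 1 + 1 : ℕ) : ZMod p) := by push_cast; ring
          rw [hcast, he] at hc
          have hnz : ((g.natDegree : ℕ) : ZMod p) ≠ 0 := by
            intro hh
            rw [ZMod.natCast_eq_zero_iff] at hh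
            have := Nat.le_of_dvd (by omega) hh
            omega
          have hlc : g.coeff g.natDegree ≠ 0 := Polynomial.leadingCoeff_ne_zero.2 hg
          rcases mul_eq_zero.1 hc.symm with h' | h'
          · exact hlc h'
          · exact hnz h'
        set h := Polynomial.X * g.derivative with hdef
        have hne : h ≠ 0 := mul_ne_zero Polynomial.X_ne_zero hder
        have hrmh : h.rootMultiplicity 1 = m - 1 := by
          rw [hdef, Polynomial.rootMultiplicity_mul hne, rm_one_X, zero_add, hrm']
        have hdegh : h.natDegree ≤ g.natDegree := by
          rw [hdef, Polynomial.natDegree_mul Polynomial.X_ne_zero hder,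
            Polynomial.natDegree_X]
          have := Polynomial.natDegree_derivative_le g
          omega
        have hm1 : 1 ≤ m := by omega
        have hih := ih h (by omega) hne (by omega)
        -- h.support ⊆ g.support.erase 0
        have hsub : h.support ⊆ g.support.erase 0 := by
          intro k hk
          rw [Polynomial.mem_support_iff] at hk
          cases k with
          | zero =>
            rw [hdef, Polynomial.coeff_X_mul_zero] at hk
            exact absurd rfl hk
          | succ j =>
            rw [hdef, Polynomial.coeff_X_mul, Polynomial.coeff_derivative] at hk
            refine Finset.mem_erase.2 ⟨by omega, Polynomial.mem_support_iff.2 ?_⟩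
            intro hc
            rw [hc, zero_mul] at hk
            exact hk rfl
        have h0mem : (0 : ℕ) ∈ g.support := Polynomial.mem_support_iff.2 h0
        have hcard : h.support.card ≤ g.support.card - 1 := by
          have := Finset.card_le_card hsub
          rwa [Finset.card_erase_of_mem h0mem] at this
        have hpos : 1 ≤ g.support.card := Finset.card_pos.2 ⟨0, h0mem⟩
        omega

theorem mult_one_lt_support (p : ℕ) (hp : p.Prime) (g : Polynomial (ZMod p))
    (hg : g ≠ 0) (hdeg : g.natDegree < p) :
    g.rootMultiplicity 1 < g.support.card := by
  exact key p hp (g.natDegree + g.rootMultiplicity 1) g le_rfl hg hdeg
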